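/- arXiv:1607.08832 — 4 statements merged into one kernel-verified Lean document; each statement's English description precedes it below -/
import Mathlib

section
/- Let G be a digraph with adjacency matrix A and regular partition π with quotient matrix B. Let m(x) = x^r − α_{r−1}x^{r−1} − ⋯ − α_0 be the minimal polynomial of B. Then the numbers n_k = s·B^k·jᵀ (the orders of the iterated line digraphs L^k(G)) satisfy the linear recurrence n_k = α_{r−1} n_{k−1} + ⋯ + α_0 n_{k−r} for all k ≥ r. -/
open Matrix Polynomial

/-- If the minimal polynomial of the quotient matrix `B` is
`xʳ - α_{r-1}x^{r-1} - ⋯ - α₀`, then `n_k = s·Bᵏ·jᵀ` (the order of `Lᵏ(G)`)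
satisfies the recurrence `n_k = α_{r-1}n_{k-1} + ⋯ + α₀ n_{k-r}` for `k ≥ r`. -/
theorem stmt4 {V : Type*} [Fintype V] [DecidableEq V] {m : ℕ}
    (A : Matrix V V ℚ) (π : V → Fin m)
    (S : Matrix V (Fin m) ℚ) (hS : ∀ u i, S u i = if π u = i then 1 else 0)
    (B : Matrix (Fin m) (Fin m) ℚ) (hB : S * B = A * S)
    (s : Fin m → ℚ) (hs : ∀ i, s i = ∑ u, S u i)
    (r : ℕ) (hr : 1 ≤ r) (α : ℕ → ℚ)
    (hmin : minpoly ℚ B = X ^ r - ∑ i ∈ Finset.range r, C (α i) * X ^ i)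
    (n : ℕ → ℚ) (hn : ∀ k, n k = ∑ i, ∑ j, s i * (B ^ k) i j) :
    ∀ k, r ≤ k → n k = ∑ i ∈ Finset.range r, α i * n (k - r + i) := by
  have h0 := minpoly.aeval ℚ B
  rw [hmin] at h0
  simp only [map_sub, map_sum, map_pow, aeval_X, _root_.map_mul, aeval_C,
    ← Algebra.smul_def, sub_eq_zero] at h0
  intro k hk
  have hBk : B ^ k = ∑ t ∈ Finset.range r, α t • B ^ (k - r + t) := by
    have h1 : B ^ k = B ^ (k - r) * B ^ r := by
      rw [← pow_add]; congr 1; omega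
    rw [h1, h0, Finset.mul_sum]
    refine Finset.sum_congr rfl fun t ht => ?_
    rw [Matrix.mul_smul, ← pow_add]
  rw [hn, hBk]
  simp only [Matrix.sum_apply, Matrix.smul_apply, smul_eq_mul, Finset.mul_sum]
  conv_lhs => enter [2, i]; rw [Finset.sum_comm]
  rw [Finset.sum_comm]
  simp only [hn, Finset.mul_sum]
  exact Finset.sum_congr rfl fun t _ => Finset.sum_congr rfl fun i _ =>
    Finset.sum_congr rfl fun j _ => by ring
end

section
/- Let B = [[0,1,1],[0,1,1],[1,0,0]], s = (6,6,6), and j = (1,1,1). Define n_k = s·B^k·jᵀ. Then n_0 = 18, n_1 = 30, and n_k = n_{k−1} + n_{k−2} for all k ≥ 2. -/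
open Matrix

/-- For `B = [[0,1,1],[0,1,1],[1,0,0]]`, `s = (6,6,6)`, `j = (1,1,1)`, the
numbers `n_k = s·Bᵏ·jᵀ` satisfy `n₀ = 18`, `n₁ = 30` and the Fibonacci-type
recurrence `n_k = n_{k-1} + n_{k-2}` for `k ≥ 2`. -/
theorem stmt7 (B : Matrix (Fin 3) (Fin 3) ℚ)
    (hB : B = !![0, 1, 1; 0, 1, 1; 1, 0, 0])
    (n : ℕ → ℚ) (hn : ∀ k, n k = ((![6, 6, 6] : Fin 3 → ℚ) ᵥ* B ^ k) ⬝ᵥ ![1, 1, 1]) :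
    n 0 = 18 ∧ n 1 = 30 ∧ ∀ k, 2 ≤ k → n k = n (k - 1) + n (k - 2) := by
  have key : (![6, 6, 6] : Fin 3 → ℚ) ᵥ* B ^ 2
      = (![6, 6, 6] : Fin 3 → ℚ) ᵥ* B ^ 1 + (![6, 6, 6] : Fin 3 → ℚ) ᵥ* B ^ 0 := by
    subst hB
    simp [pow_succ]
    norm_num
  refine ⟨?_, ?_, ?_⟩
  · rw [hn]; subst hB; simp [dotProduct, Fin.sum_univ_succ]; norm_num
  · rw [hn]; subst hB
    simp [vecMul, dotProduct, Fin.sum_univ_succ]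
    norm_num
  · intro k hk
    obtain ⟨m, rfl⟩ : ∃ m, k = m + 2 := ⟨k - 2, by omega⟩
    rw [hn, hn, hn]
    have h1 : m + 2 - 1 = m + 1 := by omega
    have h2 : m + 2 - 2 = m := by omega
    rw [h1, h2]
    have : B ^ (m + 2) = B ^ 2 * B ^ m := by rw [← pow_add]; ring_nf
    rw [this, ← vecMul_vecMul, key, add_vecMul, add_dotProduct,
      vecMul_vecMul, vecMul_vecMul, ← pow_add, ← pow_add, Nat.add_comm 1 m]
    simp
end

section
/- For d ≥ 2, let B = [[1,d−1,0,0],[0,0,1,d−2],[1,d−1,0,0],[0,0,1,d−2]], s = ((d+1)d, (d+1)d(d−1), (d+1)d(d−1), (d+1)d(d−1)(d−2)), j = (1,1,1,1), and n_k = s·B^k·jᵀ. Then n_0 = d^4 + d, n_1 = d^5 − d^4 + d^3 + 2d^2 − d, and n_k = (d−1)n_{k−1} + n_{k−2} for all k ≥ 2. -/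
open Matrix

/-- For `d ≥ 2`, with `B` the quotient matrix of `CK(d,4)` and `s` the vector
of cell sizes, `n_k = s·Bᵏ·jᵀ` satisfies `n₀ = d⁴ + d`,
`n₁ = d⁵ - d⁴ + d³ + 2d² - d` and `n_k = (d-1)n_{k-1} + n_{k-2}` for `k ≥ 2`. -/
theorem stmt9 (d : ℤ) (hd : 2 ≤ d)
    (B : Matrix (Fin 4) (Fin 4) ℤ)
    (hB : B = !![1, d - 1, 0, 0; 0, 0, 1, d - 2; 1, d - 1, 0, 0; 0, 0, 1, d - 2])
    (s : Fin 4 → ℤ)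
    (hs : s = ![(d + 1) * d, (d + 1) * d * (d - 1), (d + 1) * d * (d - 1),
      (d + 1) * d * (d - 1) * (d - 2)])
    (n : ℕ → ℤ) (hn : ∀ k, n k = (s ᵥ* B ^ k) ⬝ᵥ ![1, 1, 1, 1]) :
    n 0 = d ^ 4 + d ∧ n 1 = d ^ 5 - d ^ 4 + d ^ 3 + 2 * d ^ 2 - d ∧
      ∀ k, 2 ≤ k → n k = (d - 1) * n (k - 1) + n (k - 2) := by
  have hB3 : B ^ 3 = (d - 1) • B ^ 2 + B := by
    subst hB
    ext i j
    fin_cases i <;> fin_cases j <;>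
      simp [pow_succ, Matrix.mul_apply, Fin.sum_univ_four, Matrix.vecHead,
        Matrix.vecTail] <;> ring
  have h0 : n 0 = d ^ 4 + d := by
    rw [hn 0]
    simp [hs, pow_zero, Matrix.vecMul_one, dotProduct, Fin.sum_univ_four]
    ring
  have h1 : n 1 = d ^ 5 - d ^ 4 + d ^ 3 + 2 * d ^ 2 - d := by
    rw [hn 1]
    simp [hs, hB, pow_one, Matrix.vecMul, dotProduct, Fin.sum_univ_four,
      Matrix.mul_apply]
    ring
  have h2 : n 2 = (d - 1) * n 1 + n 0 := by
    rw [hn 2, h0, h1]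
    simp [hs, hB, pow_succ, Matrix.vecMul, dotProduct, Fin.sum_univ_four,
      Matrix.mul_apply]
    ring
  refine ⟨h0, h1, ?_⟩
  intro k hk
  match k, hk with
  | 2, _ => simpa using h2
  | (m+3), _ =>
    have hsm : ∀ (c : ℤ) (M : Matrix (Fin 4) (Fin 4) ℤ) (v : Fin 4 → ℤ),
        (s ᵥ* (c • M)) ⬝ᵥ v = c * ((s ᵥ* M) ⬝ᵥ v) := by
      intro c M v
      simp [Matrix.vecMul, dotProduct, Fin.sum_univ_four, Matrix.smul_apply]
      ring
    have hBk : B ^ (m + 3) = (d - 1) • B ^ (m + 2) + B ^ (m + 1) := by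
      rw [pow_add B m 3, hB3, Matrix.mul_add, mul_smul_comm, ← pow_add, ← pow_succ]
    rw [hn (m + 3), hBk]
    rw [Matrix.vecMul_add, add_dotProduct, hsm]
    have e1 : m + 3 - 1 = m + 2 := rfl
    have e2 : m + 3 - 2 = m + 1 := rfl
    rw [e1, e2, hn (m + 2), hn (m + 1)]
end

section
/- Let B = [[1,1,0],[0,0,d],[0,0,0]], s = (n, n, n·d), and j = (1,1,1), for positive integers n and d. Then n_k := s·B^k·jᵀ = n(d+2) for all k ≥ 0. -/
open Matrix

/-- For the quotient matrix `B = [[1,1,0],[0,0,d],[0,0,0]]` of the unicyclic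
digraph `G_{n,d}`, with `s = (n, n, nd)` and `j = (1,1,1)`, the numbers
`n_k = s·Bᵏ·jᵀ` are constant, equal to `n(d+2)`. -/
theorem stmt13 (n d : ℕ) (hn : 0 < n) (hd : 0 < d)
    (B : Matrix (Fin 3) (Fin 3) ℚ)
    (hB : B = !![1, 1, 0; 0, 0, (d : ℚ); 0, 0, 0]) :
    ∀ k : ℕ, ((![(n : ℚ), n, n * d]) ᵥ* B ^ k) ⬝ᵥ ![1, 1, 1] = n * (d + 2) := by
  have hsB : (![(n : ℚ), n, n * d]) ᵥ* B = ![(n : ℚ), n, n * d] := by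
    subst hB
    ext i
    fin_cases i <;> simp [vecMul, dotProduct, Fin.sum_univ_succ]
  have hpow : ∀ k : ℕ, (![(n : ℚ), n, n * d]) ᵥ* B ^ k = ![(n : ℚ), n, n * d] := by
    intro k
    induction k with
    | zero => simp
    | succ k ih => rw [pow_succ, ← vecMul_vecMul, ih, hsB]
  intro k
  rw [hpow]
  simp [dotProduct, Fin.sum_univ_succ]
  ring
end
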